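/- For every real parameter a, the quartic f(x,y) = 1/4 + x - x^2 + a x^3 + xy + x^2 y^2 is an invariant algebraic curve of the system ẋ = 2(1 + 2x - 2a x^2 + 6xy), ẏ = 8 - 3a - 14a x - 2a xy - 8y^2; i.e. there exists a polynomial cofactor k of degree at most 1 with p·f_x + q·f_y = k·f. -/

import Mathlib

/-- The quartic `1/4 + x - x² + ax³ + xy + x²y² = 0` is an invariant algebraic curve of the
Chavarriga–Llibre–Sorolla (CLS) system, with a polynomial cofactor of degree at most 1. -/
theorem cls_curve_invariant (a : ℝ) :
    ∃ k0 k1 k2 : ℝ, ∀ x y : ℝ,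
      (2 * (1 + 2 * x - 2 * a * x ^ 2 + 6 * x * y)) *
          deriv (fun t : ℝ =>
            1 / 4 + t - t ^ 2 + a * t ^ 3 + t * y + t ^ 2 * y ^ 2) x +
        (8 - 3 * a - 14 * a * x - 2 * a * x * y - 8 * y ^ 2) *
          deriv (fun t : ℝ =>
            1 / 4 + x - x ^ 2 + a * x ^ 3 + x * t + x ^ 2 * t ^ 2) y =
      (k0 + k1 * x + k2 * y) *
        (1 / 4 + x - x ^ 2 + a * x ^ 3 + x * y + x ^ 2 * y ^ 2) := by
  refine ⟨8, -12 * a, 8, fun x y => ?_⟩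
  have h1 : deriv (fun t : ℝ =>
      1 / 4 + t - t ^ 2 + a * t ^ 3 + t * y + t ^ 2 * y ^ 2) x
      = 1 - 2 * x + 3 * a * x ^ 2 + y + 2 * x * y ^ 2 := by
    have : HasDerivAt (fun t : ℝ =>
        1 / 4 + t - t ^ 2 + a * t ^ 3 + t * y + t ^ 2 * y ^ 2)
        (1 - 2 * x + 3 * a * x ^ 2 + y + 2 * x * y ^ 2) x := by
      have h := ((((((hasDerivAt_const x (1/4 : ℝ)).add (hasDerivAt_id x)).sub
        ((hasDerivAt_pow 2 x))).add
        ((hasDerivAt_pow 3 x).const_mul a)).add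
        ((hasDerivAt_id x).mul_const y)).add
        ((hasDerivAt_pow 2 x).mul_const (y ^ 2)))
      refine h.congr_deriv ?_
      norm_num
      ring
    exact this.deriv
  have h2 : deriv (fun t : ℝ =>
      1 / 4 + x - x ^ 2 + a * x ^ 3 + x * t + x ^ 2 * t ^ 2) y
      = x + 2 * x ^ 2 * y := by
    have : HasDerivAt (fun t : ℝ =>
        1 / 4 + x - x ^ 2 + a * x ^ 3 + x * t + x ^ 2 * t ^ 2)
        (x + 2 * x ^ 2 * y) y := by
      have h := (((hasDerivAt_const y (1 / 4 + x - x ^ 2 + a * x ^ 3 : ℝ)).add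
        ((hasDerivAt_id y).const_mul x)).add
        ((hasDerivAt_pow 2 y).const_mul (x ^ 2)))
      refine h.congr_deriv ?_
      norm_num
      ring
    exact this.deriv
  rw [h1, h2]
  ring
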